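/- Let a, b > 0 be real numbers and 0 < t < 1. Then ((a ∇ b)/(a ! b))^{4t(1-t)} · !_t(a,b) ≤ a ∇ b. -/

import Mathlib

/-- The weighted harmonic mean of positive reals: `a !_t b = ((1-t)a⁻¹ + t b⁻¹)⁻¹`. -/
noncomputable def wharm (t a b : ℝ) : ℝ := ((1 - t) * a⁻¹ + t * b⁻¹)⁻¹

/-- The harmonic Heinz mean `!_t(a,b) = (a !_t b + a !_{1-t} b)/2`. -/
noncomputable def heinzHarm (t a b : ℝ) : ℝ := (wharm t a b + wharm (1 - t) a b) / 2

theorem stmt_4 (a b t : ℝ) (ha : 0 < a) (hb : 0 < b) (ht0 : 0 < t) (ht1 : t < 1) :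
    (((a + b) / 2) / wharm (1 / 2) a b) ^ (4 * t * (1 - t)) * heinzHarm t a b
      ≤ (a + b) / 2 := by
  have ha' := ha.ne'
  have hb' := hb.ne'
  have ht1' : 0 < 1 - t := by linarith
  set x : ℝ := (a - b) ^ 2 / (4 * a * b) with hxdef
  have hx : 0 ≤ x := by positivity
  set r : ℝ := 4 * t * (1 - t) with hrdef
  have hr0 : 0 ≤ r := by positivity
  have hr1 : r ≤ 1 := by nlinarith [sq_nonneg (2 * t - 1)]
  -- first weighted mean denominators positive
  have hd1 : 0 < (1 - t) * a⁻¹ + t * b⁻¹ := by positivity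
  have hd2 : 0 < (1 - (1 - t)) * a⁻¹ + (1 - t) * b⁻¹ := by
    have h : (1 - (1 - t)) * a⁻¹ + (1 - t) * b⁻¹ = t * a⁻¹ + (1 - t) * b⁻¹ := by ring
    rw [h]; positivity
  have hw1 : 0 < wharm t a b := inv_pos.mpr hd1
  have hw2 : 0 < wharm (1 - t) a b := inv_pos.mpr hd2
  have hheinz : 0 < heinzHarm t a b := div_pos (add_pos hw1 hw2) two_pos
  -- rewrite base as 1 + x
  have hbase : ((a + b) / 2) / wharm (1 / 2) a b = 1 + x := by
    unfold wharm
    rw [hxdef]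
    field_simp
    ring
  rw [hbase]
  -- Bernoulli
  have hbern : (1 + x) ^ r ≤ 1 + r * x :=
    rpow_one_add_le_one_add_mul_self (by linarith) hr0 hr1
  have hkey : (1 + r * x) * heinzHarm t a b = (a + b) / 2 := by
    unfold heinzHarm wharm
    rw [hxdef, hrdef]
    have h1 : ((1 - t) * a⁻¹ + t * b⁻¹) ≠ 0 := hd1.ne'
    have h2 : ((1 - (1 - t)) * a⁻¹ + (1 - t) * b⁻¹) ≠ 0 := hd2.ne'
    have h3 : b * (1 - (1 - t)) + (1 - t) * a ≠ 0 := by nlinarith [mul_pos ha ht1', mul_pos hb ht0]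
    field_simp
    ring
  calc (1 + x) ^ r * heinzHarm t a b
      ≤ (1 + r * x) * heinzHarm t a b :=
        mul_le_mul_of_nonneg_right hbern hheinz.le
    _ = (a + b) / 2 := hkey
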